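/- arXiv:1404.3847 — 2 statements merged into one kernel-verified Lean document; each statement's English description precedes it below -/
import Mathlib

section
/- Let V be a finite-dimensional real vector space with a quadratic form q of signature (k, 3) with k ≥ 1, extended bilinearly to the complexification V ⊗ ℂ. For any line l ⊆ V ⊗ ℂ with q(l, l) = 0 and q(l, l̄) > 0 (for a nonzero generator), the real and imaginary parts of a generator of l span a 2-dimensional subspace of V on which q is positive definite. -/
/-- The complexification of a real bilinear form `B`, where an element
`v = Re v + i · Im v` of `V ⊗ ℂ` is encoded as the pair `(Re v, Im v) : V × V`,
and `B` is extended `ℂ`-bilinearly. -/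
noncomputable def complexifiedForm {V : Type*} [AddCommGroup V] [Module ℝ V]
    (B : V →ₗ[ℝ] V →ₗ[ℝ] ℝ) (v w : V × V) : ℂ :=
  ((B v.1 w.1 - B v.2 w.2 : ℝ) : ℂ) + ((B v.1 w.2 + B v.2 w.1 : ℝ) : ℂ) * Complex.I

/-- Complex conjugation on `V ⊗ ℂ`, in the encoding `v = (Re v, Im v)`. -/
def complexConj {V : Type*} [AddCommGroup V] [Module ℝ V] (v : V × V) : V × V :=
  (v.1, -v.2)

/-- Let `q` be a symmetric bilinear form of signature `(k,3)`, `k ≥ 1`, on a real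
vector space `V` (given by an orthogonal basis with `k` vectors of square `+1` and
`3` vectors of square `-1`).  For any generator `v = (Re v, Im v)` of a line
`l ⊆ V ⊗ ℂ` with `q(l,l) = 0` and `q(l, l̄) > 0`, the real and imaginary parts of
`v` span a 2-dimensional subspace of `V` on which `q` is positive definite. -/
theorem isotropic_positive_line_span {V : Type*} [AddCommGroup V] [Module ℝ V]
    [FiniteDimensional ℝ V]
    (B : V →ₗ[ℝ] V →ₗ[ℝ] ℝ) (hsymm : ∀ v w : V, B v w = B w v)
    (k : ℕ) (hk : 1 ≤ k) (e : Module.Basis (Fin (k + 3)) ℝ V)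
    (horth : ∀ i j, i ≠ j → B (e i) (e j) = 0)
    (hsig : ∀ i : Fin (k + 3), B (e i) (e i) = if (i : ℕ) < k then 1 else -1)
    (v : V × V) (hv : v ≠ 0)
    (hvv : complexifiedForm B v v = 0)
    (hvbar : ∃ r : ℝ, 0 < r ∧ complexifiedForm B v (complexConj v) = (r : ℂ)) :
    Module.finrank ℝ (Submodule.span ℝ ({v.1, v.2} : Set V)) = 2 ∧
      ∀ w ∈ Submodule.span ℝ ({v.1, v.2} : Set V), w ≠ 0 → 0 < B w w := by
  obtain ⟨r, hr, hrq⟩ := hvbar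
  set x := v.1
  set y := v.2
  have hre := congrArg Complex.re hvv
  have him := congrArg Complex.im hvv
  have hre2 := congrArg Complex.re hrq
  simp [complexifiedForm, complexConj, Complex.add_re, Complex.add_im] at hre him hre2
  have hxy : B x y = 0 := by have := hsymm x y; linarith
  have hxx : B x x = r / 2 := by linarith
  have hyy : B y y = r / 2 := by linarith
  have hxxpos : 0 < B x x := by rw [hxx]; linarith
  have hyypos : 0 < B y y := by rw [hyy]; linarith
  have hyx : B y x = 0 := by rw [hsymm y x]; exact hxy
  have hli : LinearIndependent ℝ ![x, y] := by
    rw [LinearIndependent.pair_iff]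
    intro s t hst
    have h1 : B (s • x + t • y) x = 0 := by rw [hst]; simp
    have h2 : B (s • x + t • y) y = 0 := by rw [hst]; simp
    simp only [map_add, map_smul, LinearMap.add_apply, LinearMap.smul_apply,
      smul_eq_mul, hxy, hyx, mul_zero, add_zero, zero_add] at h1 h2
    constructor
    · rcases mul_eq_zero.mp h1 with h | h
      · exact h
      · exact absurd h (ne_of_gt hxxpos)
    · rcases mul_eq_zero.mp h2 with h | h
      · exact h
      · exact absurd h (ne_of_gt hyypos)
  constructor
  · have hrange : Set.range ![x, y] = ({x, y} : Set V) := by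
      simp [Matrix.range_cons, Matrix.range_empty, Set.pair_comm]
    have := finrank_span_eq_card (R := ℝ) hli
    rw [hrange] at this
    simpa using this
  · intro w hw hwne
    rw [Submodule.mem_span_pair] at hw
    obtain ⟨a, b, rfl⟩ := hw
    have hab : a ≠ 0 ∨ b ≠ 0 := by
      by_contra h
      push_neg at h
      apply hwne
      rw [h.1, h.2]; simp
    have hBw : B (a • x + b • y) (a • x + b • y) = a ^ 2 * B x x + b ^ 2 * B y y := by
      simp only [map_add, map_smul, LinearMap.add_apply, LinearMap.smul_apply,
        smul_eq_mul, hxy, hyx, mul_zero, add_zero, zero_add]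
      ring
    rw [hBw]
    rcases hab with h | h
    · have : 0 < a ^ 2 := by positivity
      nlinarith [sq_nonneg b]
    · have : 0 < b ^ 2 := by positivity
      nlinarith [sq_nonneg a]
end

section
/- Let q be a quadratic form on H² (a finite-dimensional rational vector space) and c > 0 a constant such that for all η: ∫ η^{2n} = c·q(η,η)^n (Fujiki relation), with n ≥ 1. Then q is determined up to sign by this relation: if q' is another quadratic form with ∫ η^{2n} = c'·q'(η,η)^n for all η, with c' > 0, then q' = λ·q for some λ ∈ ℝ with λ^n = c/c'. In particular, if n is odd, λ > 0 and q' is a positive multiple of q. -/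
private lemma quad_expand {V : Type*} [AddCommGroup V] [Module ℝ V]
    (Q : QuadraticForm ℝ V) (u v : V) (t : ℝ) :
    Q (u + t • v) = Q u + t * QuadraticMap.polar Q u v + t ^ 2 * Q v := by
  have h1 : Q (u + t • v) = Q u + Q (t • v) + QuadraticMap.polar Q u (t • v) := by
    simp [QuadraticMap.polar]
  rw [h1, QuadraticMap.polar_smul_right, QuadraticMap.map_smul]
  simp [smul_eq_mul]
  ring

/-- If two quadratic forms have equal squares pointwise, they cannot take opposite
nonzero signs at two points. -/
private lemma sign_clash {V : Type*} [AddCommGroup V] [Module ℝ V]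
    (Q S : QuadraticForm ℝ V) (h : ∀ η : V, (Q η) ^ 2 = (S η) ^ 2)
    (u v : V) (hu : Q u = S u) (hune : S u ≠ 0)
    (hv : Q v = - S v) (hvne : S v ≠ 0) : False := by
  set a := S u with ha
  set b := S v with hb
  set p := QuadraticMap.polar S u v with hp
  set p' := QuadraticMap.polar Q u v with hp'
  have key : ∀ t : ℝ, (a + t * p' + t ^ 2 * (-b)) ^ 2 = (a + t * p + t ^ 2 * b) ^ 2 := by
    intro t
    have := h (u + t • v)
    rw [quad_expand Q u v t, quad_expand S u v t, hu, hv] at this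
    convert this using 2 <;> ring
  have e1 := key 1
  have e2 := key (-1)
  have e3 := key 2
  -- coefficient extraction
  have hc1 : 2 * a * (p' - p) = 0 := by linear_combination e1 - (1/3) * e2 - (1/6) * e3
  have hc2 : p' ^ 2 - p ^ 2 - 4 * a * b = 0 := by linear_combination (1/2) * e1 + (1/2) * e2
  have hc3 : -2 * b * (p' + p) = 0 := by linear_combination (1/6) * e3 - (1/2) * e1 - (1/6) * e2
  have hpp : p' = p := by
    rcases mul_eq_zero.mp hc1 with h' | h'
    · rcases mul_eq_zero.mp h' with h2 | h2
      · norm_num at h2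
      · exact absurd h2 hune
    · linarith
  have hpm : p' = -p := by
    have : p' + p = 0 := by
      rcases mul_eq_zero.mp hc3 with h' | h'
      · rcases mul_eq_zero.mp (show (-2:ℝ) * b = 0 from h') with h2 | h2
        · norm_num at h2
        · exact absurd h2 hvne
      · exact h'
    linarith
  have hp0 : p = 0 := by linarith
  have : a * b = 0 := by
    have := hc2
    rw [hpp, hp0] at this
    linarith
  rcases mul_eq_zero.mp this with h' | h'
  · exact hune h'
  · exact hvne h'

/-- The Fujiki relation determines the quadratic form up to sign: if a homogeneous
polynomial function `P = ∫ η^{2n}` satisfies `P = c·qⁿ = c'·q'ⁿ` for nondegenerate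
quadratic forms `q, q'` and positive constants `c, c'` on a finite-dimensional real
vector space, then `q' = λ·q` with `λⁿ = c/c'`; in particular `λ > 0` when `n` is
odd. -/
theorem fujiki_form_unique_up_to_sign {V : Type*} [AddCommGroup V] [Module ℝ V]
    [FiniteDimensional ℝ V]
    (n : ℕ) (hn : 1 ≤ n) (q q' : QuadraticForm ℝ V)
    (hq : ∀ v : V, (∀ w : V, QuadraticMap.polar q v w = 0) → v = 0)
    (hq' : ∀ v : V, (∀ w : V, QuadraticMap.polar q' v w = 0) → v = 0)
    (c c' : ℝ) (hc : 0 < c) (hc' : 0 < c')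
    (P : V → ℝ) (hP : ∀ η : V, P η = c * (q η) ^ n)
    (hP' : ∀ η : V, P η = c' * (q' η) ^ n) :
    ∃ l : ℝ, (∀ η : V, q' η = l * q η) ∧ l ^ n = c / c' ∧ (Odd n → 0 < l) := by
  have hn0 : n ≠ 0 := by omega
  set r : ℝ := (c / c') ^ ((n : ℝ)⁻¹) with hr
  have hccpos : 0 < c / c' := div_pos hc hc'
  have hrpos : 0 < r := Real.rpow_pos_of_pos hccpos _
  have hrn : r ^ n = c / c' := Real.rpow_inv_natCast_pow hccpos.le hn0
  -- pointwise n-th power equality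
  have hkey : ∀ η : V, (q' η) ^ n = (r * q η) ^ n := by
    intro η
    have h1 : c * (q η) ^ n = c' * (q' η) ^ n := by rw [← hP, ← hP']
    have : (q' η) ^ n = (c / c') * (q η) ^ n := by
      field_simp at h1 ⊢
      linarith
    rw [this, ← hrn, mul_pow]
  rcases Nat.even_or_odd n with hev | hodd
  · -- even case: squares agree pointwise
    obtain ⟨m, hm⟩ := hev
    have hm0 : m ≠ 0 := by omega
    have hsq : ∀ η : V, (q' η) ^ 2 = (r * q η) ^ 2 := by
      intro η
      have h := hkey η
      rw [show n = 2 * m by omega, pow_mul, pow_mul] at h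
      exact (pow_left_strictMonoOn₀ (M₀ := ℝ) hm0).injOn (Set.mem_setOf.mpr (sq_nonneg (q' η))) (Set.mem_setOf.mpr (sq_nonneg (r * q η))) h
    -- q' η = ± r * q η pointwise
    have halt : ∀ η : V, q' η = r * q η ∨ q' η = -(r * q η) := by
      intro η
      have := hsq η
      rcases (Commute.sq_eq_sq_iff_eq_or_eq_neg (Commute.all _ _)).mp this with h | h
      · exact Or.inl h
      · exact Or.inr h
    set S : QuadraticForm ℝ V := r • q with hS
    have hSapp : ∀ η : V, S η = r * q η := by
      intro η; simp [hS, smul_eq_mul]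
    have hsq' : ∀ η : V, (q' η) ^ 2 = (S η) ^ 2 := by
      intro η; rw [hSapp]; exact hsq η
    by_cases hall : ∀ η : V, q' η = r * q η
    · exact ⟨r, hall, hrn, fun ho => hrpos⟩
    · push_neg at hall
      obtain ⟨u, hu⟩ := hall
      have hu' : q' u = -(r * q u) := (halt u).resolve_left hu
      have hune : r * q u ≠ 0 := by
        intro h0
        rw [h0] at hu hu'
        rw [hu'] at hu
        simp at hu
      refine ⟨-r, ?_, ?_, ?_⟩
      · intro v
        rcases halt v with h | h
        · by_cases hv0 : r * q v = 0
          · have hz : q' v = 0 := by rw [h, hv0]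
            rw [hz]; linear_combination hv0
          · exact absurd (sign_clash q' S hsq' v u h (by rw [hSapp]; exact hv0)
              (by rw [hSapp]; exact hu') (by rw [hSapp]; exact hune)) id
        · rw [h]; ring
      · rw [Even.neg_pow ⟨m, hm⟩]; exact hrn
      · intro ho
        exfalso
        exact (Nat.not_odd_iff_even.mpr ⟨m, hm⟩) ho
  · -- odd case
    refine ⟨r, ?_, hrn, fun _ => hrpos⟩
    intro η
    exact Odd.strictMono_pow (R := ℝ) hodd |>.injective (hkey η)
end
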